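/- 2-Poincaré inequality for the energy measure in the fractal case: under the standing assumptions (compact doubling space, 2-Poincaré with Korevaar-Schoen energies, controlled cutoffs) and given the strongly local Dirichlet form (E, KS^{d_w/2,2}(X)) with C₁ sup_{r>0} E_{d_w/2,X}(f,r) ≤ E(f,f) ≤ C₂ liminf_{r→0⁺} E_{d_w/2,X}(f,r) and the localized bound limsup_{r→0⁺} r^{-d_w} ∫_{B(x,R)} ⨍_{B(z,r)} |f(z)−f(y)|² dμ(y) dμ(z) ≤ C ∫_{B(x,λR)} dΓ(f,f), there exist C > 0 and Λ > 1 such that ∫_{B(x,R)} |f − f_{B(x,R)}|² dμ ≤ C R^{d_w} ∫_{B(x,ΛR)} dΓ(f,f) for all f ∈ KS^{d_w/2,2}(X), x ∈ X, R > 0. -/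

import Mathlib

open MeasureTheory Metric Filter Topology

/-- The Korevaar–Schoen energy `E_{d_w/2,U}(f,r)` at scale `r` on `U`. -/
noncomputable def KSE {X : Type*} [MetricSpace X] [MeasurableSpace X]
    (μ : Measure X) (dw : ℝ) (f : X → ℝ) (U : Set X) (r : ℝ) : ℝ :=
  ∫ x in U, (⨍ y in ball x r, (f y - f x) ^ 2 ∂μ) / r ^ dw ∂μ

section Auxiliary

set_option linter.unusedSectionVars false
set_option maxHeartbeats 1000000

variable {X : Type*} [MetricSpace X] [MeasurableSpace X] [BorelSpace X] [CompactSpace X]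

/-- In a compact space, balls of a fixed radius have measure uniformly bounded below. -/
lemma exists_ball_lb (μ : Measure X) [Nonempty X]
    (hpos : ∀ (x : X) (r : ℝ), 0 < r → 0 < μ (ball x r)) {r : ℝ} (hr : 0 < r) :
    ∃ c : ENNReal, 0 < c ∧ ∀ x : X, c ≤ μ (ball x r) := by
  obtain ⟨t, ht⟩ := isCompact_univ.elim_finite_subcover (fun x : X => ball x (r/2))
    (fun x => isOpen_ball) (fun x _ => Set.mem_iUnion.2 ⟨x, mem_ball_self (by positivity)⟩)
  have htne : t.Nonempty := by
    rcases ‹Nonempty X› with ⟨x⟩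
    rcases Set.mem_iUnion₂.1 (ht (Set.mem_univ x)) with ⟨i, hi, -⟩
    exact ⟨i, hi⟩
  refine ⟨t.inf' htne (fun i => μ (ball i (r/2))), ?_, ?_⟩
  · rw [Finset.lt_inf'_iff]
    exact fun i _ => hpos i _ (by positivity)
  · intro x
    rcases Set.mem_iUnion₂.1 (ht (Set.mem_univ x)) with ⟨i, hi, hxi⟩
    refine le_trans (Finset.inf'_le _ hi) (measure_mono ?_)
    intro y hy
    have h1 : dist y i < r / 2 := mem_ball.1 hy
    have h2 : dist x i < r / 2 := mem_ball.1 hxi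
    have : dist y x < r := by
      calc dist y x ≤ dist y i + dist i x := dist_triangle _ _ _
        _ = dist y i + dist x i := by rw [dist_comm i x]
        _ < r := by linarith
    exact mem_ball.2 this

/-- The Korevaar–Schoen energy is nonnegative at positive scales. -/
lemma KSE_nonneg (μ : Measure X) (dw : ℝ) (f : X → ℝ) (U : Set X) {r : ℝ} (hr : 0 < r) :
    0 ≤ KSE μ dw f U r := by
  refine integral_nonneg fun x => ?_
  refine div_nonneg ?_ (Real.rpow_nonneg hr.le _)
  rw [setAverage_eq]
  exact smul_nonneg (by positivity) (integral_nonneg fun y => sq_nonneg _)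

/-- The Korevaar–Schoen energy only depends on the a.e. class of `f`. -/
lemma KSE_congr (μ : Measure X) (dw : ℝ) {f g : X → ℝ} (hfg : f =ᵐ[μ] g) (U : Set X) (r : ℝ) :
    KSE μ dw f U r = KSE μ dw g U r := by
  refine integral_congr_ae (ae_restrict_of_ae ?_)
  filter_upwards [hfg] with x hx
  have : (fun y => (f y - f x) ^ 2) =ᵐ[μ.restrict (ball x r)]
      (fun y => (g y - g x) ^ 2) := by
    refine ae_restrict_of_ae ?_
    filter_upwards [hfg] with y hy
    rw [hy, hx]
  rw [average_congr this]

/-- The Korevaar–Schoen energy on any set is at most the energy on the whole space,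
for a strongly measurable `L²` function. -/
lemma KSE_set_le_univ (μ : Measure X) [IsFiniteMeasure μ] (dw : ℝ) {f : X → ℝ}
    (hsm : StronglyMeasurable f) (hf2 : MemLp f 2 μ)
    {r : ℝ} (hr : 0 < r)
    {c : ENNReal} (hc : 0 < c) (hcb : ∀ x : X, c ≤ μ (ball x r))
    (hpos : ∀ (x : X) (r : ℝ), 0 < r → 0 < μ (ball x r))
    (hfin : ∀ (x : X) (r : ℝ), 0 < r → μ (ball x r) < ⊤)
    (U : Set X) :
    KSE μ dw f U r ≤ KSE μ dw f Set.univ r := by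
  have hfm : Measurable f := hsm.measurable
  set ψ : X → ℝ := fun x => (⨍ y in ball x r, (f y - f x) ^ 2 ∂μ) / r ^ dw with hψ
  -- nonnegativity of ψ
  have hψ0 : ∀ x, 0 ≤ ψ x := by
    intro x
    refine div_nonneg ?_ (Real.rpow_nonneg hr.le _)
    rw [setAverage_eq]
    exact smul_nonneg (by positivity) (integral_nonneg fun y => sq_nonneg _)
  -- measurability of ψ
  have hS : MeasurableSet {p : X × X | dist p.2 p.1 < r} :=
    (isOpen_lt (continuous_snd.dist continuous_fst) continuous_const).measurableSet
  have hmball : Measurable fun x : X => μ (ball x r) := by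
    have : ∀ x : X, μ (ball x r)
        = ∫⁻ y, {p : X × X | dist p.2 p.1 < r}.indicator (fun _ => 1) (x, y) ∂μ := by
      intro x
      have : (fun y => {p : X × X | dist p.2 p.1 < r}.indicator (fun _ => (1:ENNReal)) (x, y))
          = (ball x r).indicator (fun _ => 1) := by
        funext y
        by_cases h : y ∈ ball x r
        · have hxy : (x, y) ∈ {p : X × X | dist p.2 p.1 < r} := mem_ball.1 h
          rw [Set.indicator_of_mem hxy, Set.indicator_of_mem h]
        · have h' : (x, y) ∉ {p : X × X | dist p.2 p.1 < r} := fun hh => h (mem_ball.2 hh)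
          rw [Set.indicator_of_notMem h', Set.indicator_of_notMem h]
      rw [this, lintegral_indicator measurableSet_ball, setLIntegral_one]
    simp_rw [this]
    exact Measurable.lintegral_prod_right' ((measurable_one).indicator hS)
  have hJ : Measurable fun x : X =>
      ∫⁻ y, {p : X × X | dist p.2 p.1 < r}.indicator
        (fun p => ENNReal.ofReal ((f p.2 - f p.1) ^ 2)) (x, y) ∂μ := by
    refine Measurable.lintegral_prod_right' ?_
    exact (ENNReal.measurable_ofReal.comp
      (((hfm.comp measurable_snd).sub (hfm.comp measurable_fst)).pow_const 2)).indicator hS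
  have hψeq : ∀ x : X, ψ x = ((μ (ball x r)).toReal⁻¹ *
      (∫⁻ y, {p : X × X | dist p.2 p.1 < r}.indicator
        (fun p => ENNReal.ofReal ((f p.2 - f p.1) ^ 2)) (x, y) ∂μ).toReal) / r ^ dw := by
    intro x
    have h1 : ∫ y in ball x r, (f y - f x) ^ 2 ∂μ
        = (∫⁻ y in ball x r, ENNReal.ofReal ((f y - f x) ^ 2) ∂μ).toReal := by
      rw [integral_eq_lintegral_of_nonneg_ae (f := fun y => (f y - f x) ^ 2)
        (Filter.Eventually.of_forall fun y => sq_nonneg _)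
        (((hfm.sub measurable_const).pow_const 2).aestronglyMeasurable)]
    have h2 : (fun y => {p : X × X | dist p.2 p.1 < r}.indicator
          (fun p => ENNReal.ofReal ((f p.2 - f p.1) ^ 2)) (x, y))
        = (ball x r).indicator (fun y => ENNReal.ofReal ((f y - f x) ^ 2)) := by
      funext y
      by_cases h : y ∈ ball x r
      · have hxy : (x, y) ∈ {p : X × X | dist p.2 p.1 < r} := mem_ball.1 h
        rw [Set.indicator_of_mem hxy, Set.indicator_of_mem h]
      · have h' : (x, y) ∉ {p : X × X | dist p.2 p.1 < r} := fun hh => h (mem_ball.2 hh)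
        rw [Set.indicator_of_notMem h', Set.indicator_of_notMem h]
    show (⨍ y in ball x r, (f y - f x) ^ 2 ∂μ) / r ^ dw = _
    rw [setAverage_eq, smul_eq_mul, measureReal_def, h1, h2, lintegral_indicator measurableSet_ball]
  have hψmeas : AEStronglyMeasurable ψ μ := by
    have : Measurable ψ := by
      rw [funext hψeq]
      exact ((hmball.ennreal_toReal.inv.mul hJ.ennreal_toReal).div_const _)
    exact this.aestronglyMeasurable
  -- integrable bound
  have hK : Integrable (fun x => f x ^ 2) μ := hf2.integrable_sq
  set K : ℝ := ∫ z, f z ^ 2 ∂μ with hKdef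
  have hbound : ∀ x : X, ψ x ≤
      (c.toReal⁻¹ * (2 * K + 2 * f x ^ 2 * (μ Set.univ).toReal)) / r ^ dw := by
    intro x
    have hμb0 : μ (ball x r) ≠ 0 := (hpos x r hr).ne'
    have hμbt : μ (ball x r) ≠ ⊤ := (hfin x r hr).ne
    have hci : (μ (ball x r)).toReal⁻¹ ≤ c.toReal⁻¹ := by
      refine inv_anti₀ ?_ ?_
      · exact ENNReal.toReal_pos hc.ne' (lt_of_le_of_lt (hcb x) (hfin x r hr)).ne
      · exact ENNReal.toReal_mono hμbt (hcb x)
    have hint2 : Integrable (fun y => 2 * f y ^ 2 + 2 * f x ^ 2) μ :=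
      (hK.const_mul 2).add (integrable_const _)
    have hint1 : Integrable (fun y => (f y - f x) ^ 2) μ := by
      refine hint2.mono' (((hfm.sub measurable_const).pow_const 2).aestronglyMeasurable) ?_
      refine Filter.Eventually.of_forall fun y => ?_
      rw [Real.norm_eq_abs, abs_of_nonneg (sq_nonneg _)]
      nlinarith [sq_nonneg (f y + f x)]
    have hstep1 : ∫ y in ball x r, (f y - f x) ^ 2 ∂μ
        ≤ ∫ y in ball x r, (2 * f y ^ 2 + 2 * f x ^ 2) ∂μ := by
      refine integral_mono hint1.integrableOn hint2.integrableOn fun y => ?_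
      nlinarith [sq_nonneg (f y + f x)]
    have hstep2 : ∫ y in ball x r, (2 * f y ^ 2 + 2 * f x ^ 2) ∂μ
        ≤ ∫ y, (2 * f y ^ 2 + 2 * f x ^ 2) ∂μ := by
      refine setIntegral_le_integral hint2 ?_
      refine Filter.Eventually.of_forall fun y => ?_
      positivity
    have hstep3 : ∫ y, (2 * f y ^ 2 + 2 * f x ^ 2) ∂μ
        = 2 * K + 2 * f x ^ 2 * (μ Set.univ).toReal := by
      rw [integral_add (hK.const_mul 2) (integrable_const _), integral_const_mul,
        integral_const, smul_eq_mul, measureReal_def]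
      ring
    have havg : (⨍ y in ball x r, (f y - f x) ^ 2 ∂μ)
        ≤ c.toReal⁻¹ * (2 * K + 2 * f x ^ 2 * (μ Set.univ).toReal) := by
      rw [setAverage_eq, smul_eq_mul, measureReal_def]
      have h0 : 0 ≤ ∫ y in ball x r, (f y - f x) ^ 2 ∂μ :=
        integral_nonneg fun y => sq_nonneg _
      calc (μ (ball x r)).toReal⁻¹ * ∫ y in ball x r, (f y - f x) ^ 2 ∂μ
          ≤ c.toReal⁻¹ * ∫ y in ball x r, (f y - f x) ^ 2 ∂μ :=
            mul_le_mul_of_nonneg_right hci h0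
        _ ≤ c.toReal⁻¹ * (2 * K + 2 * f x ^ 2 * (μ Set.univ).toReal) := by
            refine mul_le_mul_of_nonneg_left ?_ (by positivity)
            exact le_trans hstep1 (le_trans hstep2 (le_of_eq hstep3))
    exact div_le_div_of_nonneg_right havg (Real.rpow_nonneg hr.le _)
  have hψint : Integrable ψ μ := by
    have hbint : Integrable
        (fun x => (c.toReal⁻¹ * (2 * K + 2 * f x ^ 2 * (μ Set.univ).toReal)) / r ^ dw) μ :=
      ((((integrable_const (2 * K)).add
        ((hK.const_mul 2).mul_const _)).const_mul _).div_const _)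
    refine Integrable.mono' hbint hψmeas ?_
    refine Filter.Eventually.of_forall fun x => ?_
    rw [Real.norm_eq_abs, abs_of_nonneg (hψ0 x)]
    exact hbound x
  have key : ∫ x in U, ψ x ∂μ ≤ ∫ x, ψ x ∂μ :=
    setIntegral_le_integral hψint (Filter.Eventually.of_forall hψ0)
  calc KSE μ dw f U r = ∫ x in U, ψ x ∂μ := rfl
    _ ≤ ∫ x, ψ x ∂μ := key
    _ = KSE μ dw f Set.univ r := by rw [KSE, Measure.restrict_univ]

/-- Monotonicity of the `L²` deviation from the mean with respect to the set. -/
lemma var_mono (μ : Measure X) [IsFiniteMeasure μ] {f : X → ℝ} (hf2 : MemLp f 2 μ)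
    {s t : Set X} (hst : s ⊆ t) (hs0 : μ s ≠ 0) :
    ∫ y in s, (f y - ⨍ z in s, f z ∂μ) ^ 2 ∂μ ≤ ∫ y in t, (f y - ⨍ z in t, f z ∂μ) ^ 2 ∂μ := by
  set m := ⨍ z in s, f z ∂μ with hm
  set c := ⨍ z in t, f z ∂μ with hc
  have hfint : Integrable f μ := hf2.integrable one_le_two
  have hsq : ∀ a : ℝ, Integrable (fun y => (f y - a) ^ 2) μ := fun a =>
    (hf2.sub (memLp_const a)).integrable_sq
  have hlin : Integrable (fun y => f y - m) μ := hfint.sub (integrable_const m)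
  have hμs : (μ s).toReal ≠ 0 :=
    (ENNReal.toReal_pos hs0 (measure_ne_top μ s)).ne'
  have hzero : ∫ y in s, (f y - m) ∂μ = 0 := by
    rw [integral_sub hfint.integrableOn (integrable_const m).integrableOn, integral_const,
      smul_eq_mul, measureReal_restrict_apply_univ, measureReal_def]
    have : m = (μ s).toReal⁻¹ * ∫ y in s, f y ∂μ := by rw [hm, setAverage_eq, smul_eq_mul, measureReal_def]
    rw [this]
    field_simp
    ring
  have key : ∫ y in s, (f y - c) ^ 2 ∂μ
      = ∫ y in s, (f y - m) ^ 2 ∂μ + (m - c) ^ 2 * (μ s).toReal := by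
    have e1 : ∫ y in s, (f y - c) ^ 2 ∂μ
        = ∫ y in s, ((f y - m) ^ 2 + ((2 * (m - c)) * (f y - m) + (m - c) ^ 2)) ∂μ := by
      refine integral_congr_ae (Filter.Eventually.of_forall fun y => by ring)
    have hg1 : Integrable (fun y => 2 * (m - c) * (f y - m)) μ := by
      exact hlin.const_mul _
    have hg : Integrable (fun y => 2 * (m - c) * (f y - m) + (m - c) ^ 2) μ := by
      exact hg1.add (integrable_const _)
    rw [e1, integral_add (hsq m).integrableOn hg.integrableOn,
      integral_add hg1.integrableOn (integrable_const _).integrableOn,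
      integral_const_mul, hzero, integral_const, smul_eq_mul,
      measureReal_restrict_apply_univ, measureReal_def]
    ring
  have step1 : ∫ y in s, (f y - m) ^ 2 ∂μ ≤ ∫ y in s, (f y - c) ^ 2 ∂μ := by
    rw [key]
    nlinarith [sq_nonneg (m - c), ENNReal.toReal_nonneg (a := μ s)]
  have step2 : ∫ y in s, (f y - c) ^ 2 ∂μ ≤ ∫ y in t, (f y - c) ^ 2 ∂μ :=
    setIntegral_mono_set (hsq c).integrableOn
      (Filter.Eventually.of_forall fun y => sq_nonneg _) (HasSubset.Subset.eventuallyLE hst)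
  exact le_trans step1 step2

end Auxiliary

/-- 2-Poincaré inequality for the energy measure in the fractal
case: `∫_{B(x,R)} |f - f_{B(x,R)}|² dμ ≤ C R^{d_w} Γ(f,f)(B(x,ΛR))`. -/
theorem stmt17 {X : Type*} [MetricSpace X] [MeasurableSpace X] [BorelSpace X]
    [CompactSpace X]
    (μ : Measure X) (CD : ℝ) (hCD : 0 < CD)
    (hpos : ∀ (x : X) (r : ℝ), 0 < r → 0 < μ (ball x r))
    (hfin : ∀ (x : X) (r : ℝ), 0 < r → μ (ball x r) < ⊤)
    (hdouble : ∀ (x : X) (r : ℝ), 0 < r →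
      μ (ball x (2 * r)) ≤ ENNReal.ofReal CD * μ (ball x r))
    (dw : ℝ) (hdw : 2 < dw)
    (𝓚𝓢 : Set (X → ℝ))
    (hKSdef : ∀ f : X → ℝ, f ∈ 𝓚𝓢 ↔ MemLp f 2 μ ∧
      Filter.IsBoundedUnder (· ≤ ·) (𝓝[>] (0 : ℝ)) (fun r => KSE μ dw f Set.univ r))
    (Eform : (X → ℝ) → ℝ) (Γ : (X → ℝ) → Measure X)
    (C₁ C₂ : ℝ) (hC₁ : 0 < C₁) (hC₂ : 0 < C₂)
    (hlower : ∀ f ∈ 𝓚𝓢, ∀ r : ℝ, 0 < r → C₁ * KSE μ dw f Set.univ r ≤ Eform f)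
    (hupper : ∀ f ∈ 𝓚𝓢,
      Eform f ≤ C₂ * Filter.liminf (fun r => KSE μ dw f Set.univ r) (𝓝[>] (0 : ℝ)))
    (C₀ lam₀ : ℝ) (hC₀ : 0 < C₀) (hlam₀ : 1 ≤ lam₀)
    -- localized bound: the limsup of localized energies is controlled by `Γ`
    (hloc : ∀ f ∈ 𝓚𝓢, ∀ (x : X) (R : ℝ), 0 < R →
      Filter.limsup (fun r => KSE μ dw f (ball x R) r) (𝓝[>] (0 : ℝ)) ≤
        C₀ * (Γ f (ball x (lam₀ * R))).toReal)
    (C lam : ℝ) (hC : 0 < C) (hlam : 1 ≤ lam)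
    -- standing 2-Poincaré inequality with Korevaar–Schoen energies
    (hPI : ∀ f ∈ 𝓚𝓢, ∀ (x : X) (R : ℝ), 0 < R →
      ∫ y in ball x R, (f y - ⨍ z in ball x R, f z ∂μ) ^ 2 ∂μ ≤
        C * R ^ dw *
          Filter.liminf (fun r => KSE μ dw f (ball x (lam * R)) r) (𝓝[>] (0 : ℝ))) :
    ∃ C' Λ : ℝ, 0 < C' ∧ 1 < Λ ∧ ∀ f ∈ 𝓚𝓢, ∀ (x : X) (R : ℝ), 0 < R →
      ∫ y in ball x R, (f y - ⨍ z in ball x R, f z ∂μ) ^ 2 ∂μ ≤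
        C' * R ^ dw * (Γ f (ball x (Λ * R))).toReal := by
  have hlam' : 0 < lam := lt_of_lt_of_le one_pos hlam
  have h2dw : (0:ℝ) < 2 ^ dw := Real.rpow_pos_of_pos two_pos dw
  refine ⟨C * 2 ^ dw * C₀, 2 * lam₀ * lam, by positivity, by nlinarith, ?_⟩
  intro f hf x R hR
  have : Nonempty X := ⟨x⟩
  -- μ is a finite measure
  obtain ⟨R₀, hR₀⟩ := (isCompact_univ (X := X)).isBounded.subset_closedBall x
  have hμfin : IsFiniteMeasure μ := by
    constructor
    have hsub : Set.univ ⊆ ball x (max R₀ 0 + 1) := by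
      refine hR₀.trans (closedBall_subset_ball ?_)
      have : R₀ ≤ max R₀ 0 := le_max_left _ _
      linarith
    calc μ Set.univ ≤ μ (ball x (max R₀ 0 + 1)) := measure_mono hsub
      _ < ⊤ := hfin x _ (by positivity)
  have hf2 : MemLp f 2 μ := ((hKSdef f).1 hf).1
  -- strongly measurable representative
  set g : X → ℝ := (hf2.aestronglyMeasurable).mk f with hgdef
  have hgsm : StronglyMeasurable g := hf2.aestronglyMeasurable.stronglyMeasurable_mk
  have hfg : f =ᵐ[μ] g := hf2.aestronglyMeasurable.ae_eq_mk
  have hg2 : MemLp g 2 μ := hf2.ae_eq hfg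
  -- uniform upper bound on localized energies
  have hbd : ∀ (U : Set X) (r : ℝ), 0 < r → KSE μ dw f U r ≤ Eform f / C₁ := by
    intro U r hr
    obtain ⟨c, hc, hcb⟩ := exists_ball_lb μ hpos hr
    have h1 : KSE μ dw f U r = KSE μ dw g U r := KSE_congr μ dw hfg U r
    have h2 := KSE_set_le_univ μ dw hgsm hg2 hr hc hcb hpos hfin U
    have h3 : KSE μ dw g Set.univ r = KSE μ dw f Set.univ r := (KSE_congr μ dw hfg _ r).symm
    have h4 : C₁ * KSE μ dw f Set.univ r ≤ Eform f := hlower f hf r hr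
    rw [h1]
    refine h2.trans ?_
    rw [h3, le_div_iff₀ hC₁]
    linarith
  -- liminf ≤ limsup for the localized energies at radius lam * (2 * R)
  have hρ : 0 < lam * (2 * R) := by positivity
  have hbddAbove : IsBoundedUnder (· ≤ ·) (𝓝[>] (0:ℝ))
      (fun r => KSE μ dw f (ball x (lam * (2 * R))) r) := by
    refine ⟨Eform f / C₁, ?_⟩
    rw [eventually_map]
    filter_upwards [self_mem_nhdsWithin] with r hr
    exact hbd _ r hr
  have hbddBelow : IsBoundedUnder (· ≥ ·) (𝓝[>] (0:ℝ))
      (fun r => KSE μ dw f (ball x (lam * (2 * R))) r) := by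
    refine ⟨0, ?_⟩
    rw [eventually_map]
    filter_upwards [self_mem_nhdsWithin] with r hr
    exact KSE_nonneg μ dw f _ hr
  have hll : Filter.liminf (fun r => KSE μ dw f (ball x (lam * (2 * R))) r) (𝓝[>] (0:ℝ))
      ≤ Filter.limsup (fun r => KSE μ dw f (ball x (lam * (2 * R))) r) (𝓝[>] (0:ℝ)) :=
    Filter.liminf_le_limsup hbddAbove hbddBelow
  have hloc2 := hloc f hf x (lam * (2 * R)) hρ
  have hrad : lam₀ * (lam * (2 * R)) = (2 * lam₀ * lam) * R := by ring
  rw [hrad] at hloc2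
  have h5 : Filter.liminf (fun r => KSE μ dw f (ball x (lam * (2 * R))) r) (𝓝[>] (0:ℝ))
      ≤ C₀ * (Γ f (ball x ((2 * lam₀ * lam) * R))).toReal := hll.trans hloc2
  have hPI2 := hPI f hf x (2 * R) (by positivity)
  have hvar := var_mono μ hf2 (ball_subset_ball (by linarith : R ≤ 2 * R)) (hpos x R hR).ne'
  calc ∫ y in ball x R, (f y - ⨍ z in ball x R, f z ∂μ) ^ 2 ∂μ
      ≤ ∫ y in ball x (2 * R), (f y - ⨍ z in ball x (2 * R), f z ∂μ) ^ 2 ∂μ := hvar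
    _ ≤ C * (2 * R) ^ dw *
        Filter.liminf (fun r => KSE μ dw f (ball x (lam * (2 * R))) r) (𝓝[>] (0:ℝ)) := hPI2
    _ ≤ C * (2 * R) ^ dw * (C₀ * (Γ f (ball x ((2 * lam₀ * lam) * R))).toReal) :=
        mul_le_mul_of_nonneg_left h5 (by positivity)
    _ = C * 2 ^ dw * C₀ * R ^ dw * (Γ f (ball x ((2 * lam₀ * lam) * R))).toReal := by
        rw [Real.mul_rpow (by norm_num) hR.le]
        ring
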